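/- Fix n ≥ 2 and reals c_{ij} for all 1 ≤ i < j ≤ n. For each TAD set T define h_T : [0,∞) → ℝ by h_T(ρ) = Σ_{(i,j) ∈ T} c_{ij}·(j − i)^{−ρ}. Then there exists a finite set D ⊆ [0,∞) with |D| ≤ 2n²·4^{n²} such that the map ρ ↦ {T : h_T(ρ) = max_{T'} h_{T'}(ρ)}, where T and T' range over all TAD sets on {1,…,n}, is constant on every connected component of [0,∞) ∖ D. -/

import Mathlib

open Finset

open Finset

/-- Rolle counting: from m+1 zeros of a differentiable function, get m zeros of the
derivative, all below the max zero. -/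
lemma rolle_count (g : ℝ → ℝ) (hg : Differentiable ℝ g) :
    ∀ Z : Finset ℝ, (∀ x ∈ Z, g x = 0) → ∀ hZ : Z.Nonempty,
      ∃ W : Finset ℝ, (∀ x ∈ W, deriv g x = 0 ∧ x < Z.max' hZ) ∧ W.card + 1 = Z.card := by
  intro Z
  induction Z using Finset.strongInduction with
  | _ Z ih =>
    intro h0 hZ
    by_cases h1 : Z.card ≤ 1
    · refine ⟨∅, by simp, ?_⟩
      have := Finset.card_pos.mpr hZ
      simp only [Finset.card_empty]
      omega
    · set M := Z.max' hZ with hMdef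
      have hM : M ∈ Z := Z.max'_mem hZ
      have hcard2 : 2 ≤ Z.card := by omega
      have hZ'card : (Z.erase M).card = Z.card - 1 := Finset.card_erase_of_mem hM
      have hZ' : (Z.erase M).Nonempty := Finset.card_pos.mp (by omega)
      obtain ⟨W', hW', hcard⟩ := ih (Z.erase M) (Finset.erase_ssubset hM)
        (fun x hx => h0 x (Finset.mem_of_mem_erase hx)) hZ'
      set M' := (Z.erase M).max' hZ' with hM'def
      have hM'mem : M' ∈ Z.erase M := Finset.max'_mem _ _
      have hM'M : M' < M := by
        have h1 : M' ∈ Z := Finset.mem_of_mem_erase hM'mem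
        have h2 : M' ≠ M := Finset.ne_of_mem_erase hM'mem
        exact lt_of_le_of_ne (Z.le_max' _ h1) h2
      obtain ⟨w, hwmem, hw0⟩ := exists_deriv_eq_zero hM'M (hg.continuous.continuousOn)
        (by rw [h0 M' (Finset.mem_of_mem_erase hM'mem), h0 M hM])
      have hwW' : w ∉ W' := by
        intro hw
        exact absurd ((hW' w hw).2.trans hwmem.1) (lt_irrefl w)
      refine ⟨insert w W', ?_, ?_⟩
      · intro x hx
        rcases Finset.mem_insert.mp hx with rfl | hx
        · exact ⟨hw0, hwmem.2⟩
        · exact ⟨(hW' x hx).1, lt_trans ((hW' x hx).2) hM'M⟩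
      · rw [Finset.card_insert_of_notMem hwW']
        omega

/-- Zeros of an exponential sum with k distinct exponents: at most k zeros
(provided the sum is not identically zero). -/
lemma expsum_zeros : ∀ (k : ℕ) (s : Finset ℝ) (a : ℝ → ℝ), s.card = k →
    (∃ ρ, ∑ l ∈ s, a l * Real.exp (l * ρ) ≠ 0) →
    ∃ Dfin : Finset ℝ, Dfin.card ≤ k ∧
      ∀ ρ, (∑ l ∈ s, a l * Real.exp (l * ρ)) = 0 → ρ ∈ Dfin := by
  intro k
  induction k with
  | zero =>
    intro s a hs hne
    obtain ⟨ρ, hρ⟩ := hne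
    rw [Finset.card_eq_zero] at hs
    simp [hs] at hρ
  | succ k ih =>
    intro s a hs hne
    have hsne : s.Nonempty := Finset.card_pos.mp (by omega)
    obtain ⟨l₀, hl₀⟩ := hsne
    set f : ℝ → ℝ := fun ρ => ∑ l ∈ s, a l * Real.exp (l * ρ) with hfdef
    set g : ℝ → ℝ := fun ρ => ∑ l ∈ s, a l * Real.exp ((l - l₀) * ρ) with hgdef
    have hgf : ∀ ρ, g ρ = f ρ * Real.exp (-(l₀ * ρ)) := by
      intro ρ
      rw [hgdef, hfdef]
      simp only [Finset.sum_mul]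
      refine Finset.sum_congr rfl fun l _ => ?_
      rw [mul_assoc, ← Real.exp_add]
      ring_nf
    have hgd : ∀ ρ, HasDerivAt g (∑ l ∈ s, a l * ((l - l₀) * Real.exp ((l - l₀) * ρ))) ρ := by
      intro ρ
      apply HasDerivAt.fun_sum
      intro l _
      have h1 : HasDerivAt (fun ρ : ℝ => (l - l₀) * ρ) (l - l₀) ρ := by
        simpa using (hasDerivAt_id ρ).const_mul (l - l₀)
      have h2 := (h1.exp).const_mul (a l)
      exact h2.congr_deriv (by ring)
    have hgdiff : Differentiable ℝ g := fun ρ => (hgd ρ).differentiableAt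
    have hgderiv : ∀ ρ, deriv g ρ = ∑ l ∈ s, a l * ((l - l₀) * Real.exp ((l - l₀) * ρ)) :=
      fun ρ => (hgd ρ).deriv
    by_cases hg' : ∀ ρ, (∑ l ∈ s, a l * ((l - l₀) * Real.exp ((l - l₀) * ρ))) = 0
    · -- g constant; f never zero
      have hconst : ∀ ρ, g ρ = g 0 :=
        fun ρ => is_const_of_deriv_eq_zero hgdiff (fun x => (hgderiv x).trans (hg' x)) ρ 0
      refine ⟨∅, by simp, ?_⟩
      intro ρ hρ0
      exfalso
      obtain ⟨ρ₀, hρ₀⟩ := hne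
      have hfρ : f ρ = 0 := hρ0
      have h1 : g ρ = 0 := by rw [hgf, hfρ, zero_mul]
      have h2 : g ρ₀ ≠ 0 := by
        rw [hgf]
        exact mul_ne_zero hρ₀ (Real.exp_ne_zero _)
      exact h2 ((hconst ρ₀).trans ((hconst ρ).symm.trans h1))
    · push_neg at hg'
      -- rewrite deriv as exponential sum over shifted exponents
      set s' : Finset ℝ := (s.erase l₀).image (· - l₀) with hs'def
      set b : ℝ → ℝ := fun μ => a (μ + l₀) * μ with hbdef
      have hinj : Set.InjOn (· - l₀) (s.erase l₀) := fun x _ y _ h => by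
        simpa using congrArg (· + l₀) h
      have hrw : ∀ ρ, (∑ μ ∈ s', b μ * Real.exp (μ * ρ))
          = ∑ l ∈ s, a l * ((l - l₀) * Real.exp ((l - l₀) * ρ)) := by
        intro ρ
        rw [hs'def, Finset.sum_image hinj]
        rw [Finset.sum_erase_eq_sub hl₀]
        simp only [hbdef, sub_add_cancel, sub_self, zero_mul, mul_zero, sub_zero]
        refine Finset.sum_congr rfl fun l _ => by ring
      have hs'card : s'.card = k := by
        rw [hs'def, Finset.card_image_of_injOn hinj, Finset.card_erase_of_mem hl₀, hs]
        omega
      obtain ⟨D', hD'card, hD'⟩ := ih s' b hs'card (by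
        obtain ⟨ρ, hρ⟩ := hg'
        exact ⟨ρ, by rw [hrw]; exact hρ⟩)
      -- any finset of zeros of f has card ≤ k+1
      have key : ∀ Z : Finset ℝ, (∀ x ∈ Z, f x = 0) → Z.card ≤ k + 1 := by
        intro Z hZ0
        by_contra hcon
        have hZne : Z.Nonempty := Finset.card_pos.mp (by omega)
        have hZg : ∀ x ∈ Z, g x = 0 := fun x hx => by
          rw [hgf, hZ0 x hx, zero_mul]
        obtain ⟨W, hW, hWcard⟩ := rolle_count g hgdiff Z hZg hZne
        have hWD' : W ⊆ D' := by
          intro x hx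
          apply hD' x
          rw [hrw, ← hgderiv]
          exact (hW x hx).1
        have := Finset.card_le_card hWD'
        omega
      have hfin : {ρ | f ρ = 0}.Finite := by
        by_contra hinf
        have hinf' : {ρ | f ρ = 0}.Infinite := hinf
        obtain ⟨Z, hZsub, hZcard⟩ := hinf'.exists_subset_card_eq (k + 2)
        have := key Z (fun x hx => hZsub hx)
        omega
      refine ⟨hfin.toFinset, ?_, fun ρ hρ => hfin.mem_toFinset.mpr hρ⟩
      by_contra hcon
      push_neg at hcon
      exact absurd (key hfin.toFinset (fun x hx => hfin.mem_toFinset.mp hx)) (by omega)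

/-- Indexed version: exponents given by an arbitrary map, bound by the index set card. -/
lemma expsum_zeros' {ι : Type} (u : Finset ι) (lam a : ι → ℝ)
    (hne : ∃ ρ, ∑ i ∈ u, a i * Real.exp (lam i * ρ) ≠ 0) :
    ∃ Dfin : Finset ℝ, Dfin.card ≤ u.card ∧
      ∀ ρ, (∑ i ∈ u, a i * Real.exp (lam i * ρ)) = 0 → ρ ∈ Dfin := by
  classical
  set s : Finset ℝ := u.image lam with hsdef
  set b : ℝ → ℝ := fun μ => ∑ i ∈ u.filter (fun i => lam i = μ), a i with hbdef
  have hrw : ∀ ρ, (∑ μ ∈ s, b μ * Real.exp (μ * ρ)) = ∑ i ∈ u, a i * Real.exp (lam i * ρ) := by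
    intro ρ
    rw [← Finset.sum_fiberwise_of_maps_to (fun i hi => Finset.mem_image_of_mem lam hi)
      (fun i => a i * Real.exp (lam i * ρ))]
    refine Finset.sum_congr rfl fun μ _ => ?_
    rw [hbdef, Finset.sum_mul]
    refine Finset.sum_congr rfl fun i hi => ?_
    rw [(Finset.mem_filter.mp hi).2]
  obtain ⟨D, hDcard, hD⟩ := expsum_zeros s.card s b rfl (by
    obtain ⟨ρ, hρ⟩ := hne
    exact ⟨ρ, by rw [hrw]; exact hρ⟩)
  exact ⟨D, hDcard.trans Finset.card_image_le, fun ρ hρ => hD ρ (by rw [hrw]; exact hρ)⟩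



/-- A TAD set on `{1, …, n}`: pairs `(i₁,j₁), …, (i_t,j_t)` with
`1 ≤ i₁ < j₁ < i₂ < j₂ < … < i_t < j_t ≤ n`. -/
def IsTADSet (n : ℕ) (T : Finset (ℕ × ℕ)) : Prop :=
  (∀ p ∈ T, 1 ≤ p.1 ∧ p.1 < p.2 ∧ p.2 ≤ n) ∧
  (∀ p ∈ T, ∀ q ∈ T, p ≠ q → (p.2 < q.1 ∨ q.2 < p.1))

/-- `h_T(ρ) = Σ_{(i,j) ∈ T} c_{ij}·(j − i)^{−ρ}`. -/
noncomputable def hTAD (c : ℕ → ℕ → ℝ) (T : Finset (ℕ × ℕ)) (ρ : ℝ) : ℝ :=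
  ∑ p ∈ T, c p.1 p.2 * ((p.2 : ℝ) - (p.1 : ℝ)) ^ (-ρ)


lemma hTAD_expsum (c : ℕ → ℕ → ℝ) {n : ℕ} {T : Finset (ℕ × ℕ)} (hT : IsTADSet n T) (ρ : ℝ) :
    hTAD c T ρ = ∑ p ∈ T, c p.1 p.2 * Real.exp ((-Real.log ((p.2:ℝ) - p.1)) * ρ) := by
  refine Finset.sum_congr rfl fun p hp => ?_
  have h1 : (p.1 : ℝ) < p.2 := by exact_mod_cast (hT.1 p hp).2.1
  have hx : (0:ℝ) < (p.2:ℝ) - p.1 := by linarith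
  rw [Real.rpow_def_of_pos hx]
  congr 2
  ring

lemma hTAD_continuous (c : ℕ → ℕ → ℝ) {n : ℕ} {T : Finset (ℕ × ℕ)} (hT : IsTADSet n T) :
    Continuous (hTAD c T) := by
  have h : Continuous (fun ρ => ∑ p ∈ T, c p.1 p.2 * Real.exp ((-Real.log ((p.2:ℝ) - p.1)) * ρ)) := by
    apply continuous_finset_sum
    intro p _
    exact continuous_const.mul (Real.continuous_exp.comp (continuous_const.mul continuous_id))
  exact h.congr (fun ρ => (hTAD_expsum c hT ρ).symm)

lemma pair_D (n : ℕ) (c : ℕ → ℕ → ℝ) (T T' : Finset (ℕ × ℕ))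
    (hT : IsTADSet n T) (hT' : IsTADSet n T') :
    ∃ Dp : Finset ℝ, (↑Dp ⊆ Set.Ici (0:ℝ)) ∧ Dp.card ≤ T.card + T'.card ∧
      ∀ ρ, 0 ≤ ρ → hTAD c T ρ = hTAD c T' ρ →
        (∀ σ, hTAD c T σ = hTAD c T' σ) ∨ ρ ∈ Dp := by
  classical
  by_cases hid : ∀ σ, hTAD c T σ = hTAD c T' σ
  · exact ⟨∅, by simp, by simp, fun ρ _ _ => Or.inl hid⟩
  · push_neg at hid
    obtain ⟨σ₀, hσ₀⟩ := hid
    set u : Finset ((ℕ × ℕ) ⊕ (ℕ × ℕ)) := T.disjSum T' with hu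
    set lam : (ℕ × ℕ) ⊕ (ℕ × ℕ) → ℝ :=
      Sum.elim (fun p => -Real.log ((p.2:ℝ) - p.1)) (fun p => -Real.log ((p.2:ℝ) - p.1)) with hlam
    set a : (ℕ × ℕ) ⊕ (ℕ × ℕ) → ℝ :=
      Sum.elim (fun p => c p.1 p.2) (fun p => -(c p.1 p.2)) with ha
    have hsum : ∀ ρ, (∑ i ∈ u, a i * Real.exp (lam i * ρ)) = hTAD c T ρ - hTAD c T' ρ := by
      intro ρ
      rw [hu, Finset.sum_disjSum, hTAD_expsum c hT ρ, hTAD_expsum c hT' ρ]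
      simp only [ha, hlam, Sum.elim_inl, Sum.elim_inr, neg_mul, sub_eq_add_neg,
        ← Finset.sum_neg_distrib]
    obtain ⟨D0, hD0card, hD0⟩ := expsum_zeros' u lam a
      ⟨σ₀, by rw [hsum]; exact sub_ne_zero.mpr hσ₀⟩
    refine ⟨D0.filter (0 ≤ ·), ?_, ?_, ?_⟩
    · intro x hx
      simp only [Finset.coe_filter, Set.mem_setOf_eq] at hx
      exact hx.2
    · calc (D0.filter (0 ≤ ·)).card ≤ D0.card := Finset.card_filter_le _ _
        _ ≤ u.card := hD0card
        _ = T.card + T'.card := Finset.card_disjSum _ _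
    · intro ρ hρ0 heq
      right
      refine Finset.mem_filter.mpr ⟨hD0 ρ ?_, hρ0⟩
      rw [hsum, heq, sub_self]

/-- there is a finite `D ⊆ [0,∞)` with `|D| ≤ 2n²·4^{n²}` such that the
set of maximizers `{T : h_T(ρ) = max_{T'} h_{T'}(ρ)}`, over TAD sets on `{1,…,n}`, is
constant on every connected component of `[0,∞) ∖ D`. -/
theorem stmt_11 (n : ℕ) (hn : 2 ≤ n) (c : ℕ → ℕ → ℝ) :
    ∃ D : Finset ℝ, (↑D : Set ℝ) ⊆ Set.Ici (0 : ℝ) ∧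
      D.card ≤ 2 * n ^ 2 * 4 ^ (n ^ 2) ∧
      ∀ ρ₁ ∈ Set.Ici (0 : ℝ), ∀ ρ₂ ∈ Set.Ici (0 : ℝ), ρ₁ ≤ ρ₂ →
        (∀ d ∈ D, ¬ (ρ₁ ≤ d ∧ d ≤ ρ₂)) →
        ∀ T : Finset (ℕ × ℕ), IsTADSet n T →
          ((∀ T', IsTADSet n T' → hTAD c T' ρ₁ ≤ hTAD c T ρ₁) ↔
           (∀ T', IsTADSet n T' → hTAD c T' ρ₂ ≤ hTAD c T ρ₂)) := by
  classical
  set E : Finset (ℕ × ℕ) := Finset.Icc 1 n ×ˢ Finset.Icc 1 n with hE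
  have hEcard : E.card = n ^ 2 := by
    simp [hE, Finset.card_product, Nat.card_Icc, sq]
  have hsub : ∀ T, IsTADSet n T → T ⊆ E := by
    intro T hT p hp
    obtain ⟨h1, h2, h3⟩ := hT.1 p hp
    simp only [hE, Finset.mem_product, Finset.mem_Icc]
    omega
  have hTcard : ∀ T, IsTADSet n T → T.card ≤ n ^ 2 :=
    fun T hT => hEcard ▸ Finset.card_le_card (hsub T hT)
  set 𝒯 : Finset (Finset (ℕ × ℕ)) := E.powerset.filter (IsTADSet n) with h𝒯
  have h𝒯mem : ∀ T, IsTADSet n T → T ∈ 𝒯 :=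
    fun T hT => Finset.mem_filter.mpr ⟨Finset.mem_powerset.mpr (hsub T hT), hT⟩
  have h𝒯card : 𝒯.card ≤ 2 ^ (n ^ 2) := by
    calc 𝒯.card ≤ E.powerset.card := Finset.card_le_card (Finset.filter_subset _ _)
      _ = 2 ^ E.card := Finset.card_powerset E
      _ = 2 ^ (n ^ 2) := by rw [hEcard]
  have hpair : ∀ P : Finset (ℕ × ℕ) × Finset (ℕ × ℕ), ∃ Dp : Finset ℝ,
      (↑Dp ⊆ Set.Ici (0:ℝ)) ∧ (IsTADSet n P.1 → IsTADSet n P.2 → Dp.card ≤ 2 * n ^ 2 ∧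
        ∀ ρ, 0 ≤ ρ → hTAD c P.1 ρ = hTAD c P.2 ρ →
          (∀ σ, hTAD c P.1 σ = hTAD c P.2 σ) ∨ ρ ∈ Dp) := by
    intro P
    by_cases h : IsTADSet n P.1 ∧ IsTADSet n P.2
    · obtain ⟨Dp, h1, h2, h3⟩ := pair_D n c P.1 P.2 h.1 h.2
      refine ⟨Dp, h1, fun _ _ => ⟨?_, h3⟩⟩
      have hc1 := hTcard P.1 h.1
      have hc2 := hTcard P.2 h.2
      omega
    · exact ⟨∅, by simp, fun h1 h2 => absurd ⟨h1, h2⟩ h⟩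
  choose Dfun hDsub hDrest using hpair
  refine ⟨(𝒯 ×ˢ 𝒯).biUnion Dfun, ?_, ?_, ?_⟩
  · intro x hx
    rw [Finset.mem_coe, Finset.mem_biUnion] at hx
    obtain ⟨P, _, hxP⟩ := hx
    exact hDsub P hxP
  · calc ((𝒯 ×ˢ 𝒯).biUnion Dfun).card ≤ ∑ P ∈ 𝒯 ×ˢ 𝒯, (Dfun P).card :=
        Finset.card_biUnion_le
      _ ≤ ∑ P ∈ 𝒯 ×ˢ 𝒯, 2 * n ^ 2 := by
        refine Finset.sum_le_sum fun P hP => ?_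
        rw [Finset.mem_product] at hP
        exact (hDrest P (Finset.mem_filter.mp hP.1).2 (Finset.mem_filter.mp hP.2).2).1
      _ = (𝒯 ×ˢ 𝒯).card * (2 * n ^ 2) := by rw [Finset.sum_const, smul_eq_mul]
      _ ≤ (2 ^ (n ^ 2) * 2 ^ (n ^ 2)) * (2 * n ^ 2) := by
        rw [Finset.card_product]
        exact Nat.mul_le_mul_right _ (Nat.mul_le_mul h𝒯card h𝒯card)
      _ = 2 * n ^ 2 * 4 ^ (n ^ 2) := by
        rw [← mul_pow]
        ring
  · intro ρ₁ hρ₁ ρ₂ hρ₂ h12 hD T hTTAD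
    have key : ∀ α β : ℝ, ρ₁ ≤ α → α ≤ ρ₂ → ρ₁ ≤ β → β ≤ ρ₂ →
        ∀ T', IsTADSet n T' → hTAD c T' α ≤ hTAD c T α → hTAD c T' β ≤ hTAD c T β := by
      intro α β hα1 hα2 hβ1 hβ2 T' hT' hle
      by_contra hcon
      push_neg at hcon
      set F : ℝ → ℝ := fun ρ => hTAD c T ρ - hTAD c T' ρ with hF
      have hFcont : Continuous F := (hTAD_continuous c hTTAD).sub (hTAD_continuous c hT')
      have hFα : 0 ≤ F α := by simp [hF]; linarith
      have hFβ : F β < 0 := by simp [hF]; linarith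
      have hzero : ∃ ρ, ρ₁ ≤ ρ ∧ ρ ≤ ρ₂ ∧ F ρ = 0 := by
        rcases le_total α β with h | h
        · obtain ⟨ρ, hρmem, hρ0⟩ := intermediate_value_Icc' h hFcont.continuousOn
            (Set.mem_Icc.mpr ⟨le_of_lt hFβ, hFα⟩)
          exact ⟨ρ, le_trans hα1 hρmem.1, le_trans hρmem.2 hβ2, hρ0⟩
        · obtain ⟨ρ, hρmem, hρ0⟩ := intermediate_value_Icc h hFcont.continuousOn
            (Set.mem_Icc.mpr ⟨le_of_lt hFβ, hFα⟩)
          exact ⟨ρ, le_trans hβ1 hρmem.1, le_trans hρmem.2 hα2, hρ0⟩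
      obtain ⟨ρ, hρa, hρb, hρ0⟩ := hzero
      have hρ0' : hTAD c T ρ = hTAD c T' ρ := by
        have := sub_eq_zero.mp hρ0
        exact this
      have hρnn : (0:ℝ) ≤ ρ := le_trans hρ₁ hρa
      rcases (hDrest (T, T') hTTAD hT').2 ρ hρnn hρ0' with hid | hmem
      · have := hid β
        simp only at this
        linarith
      · have hρD : ρ ∈ (𝒯 ×ˢ 𝒯).biUnion Dfun := Finset.mem_biUnion.mpr
          ⟨(T, T'), Finset.mem_product.mpr ⟨h𝒯mem T hTTAD, h𝒯mem T' hT'⟩, hmem⟩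
        exact hD ρ hρD ⟨hρa, hρb⟩
    constructor
    · intro h T' hT'
      exact key ρ₁ ρ₂ le_rfl h12 h12 le_rfl T' hT' (h T' hT')
    · intro h T' hT'
      exact key ρ₂ ρ₁ h12 le_rfl le_rfl h12 T' hT' (h T' hT')
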